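/- Let d = (d_1, ..., d_n) be a decreasing sequence of positive integers with even sum, let a = d_1 be its maximal element and b = d_n its minimal element. If n·b ≥ (a + b + 1)²/4, then d is graphic. -/

import Mathlib

set_option linter.unusedSectionVars false

open Finset

variable {V : Type*} [Finite V] [DecidableEq V]

/-- Graph with one extra edge `t-s`. -/
def addG (G : SimpleGraph V) (t s : V) : SimpleGraph V where
  Adj u v := u ≠ v ∧ (G.Adj u v ∨ (u = t ∧ v = s) ∨ (u = s ∧ v = t))
  symm := by
    constructor
    rintro u v ⟨h, h2⟩
    refine ⟨h.symm, ?_⟩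
    rcases h2 with h2 | h2 | h2
    · exact Or.inl h2.symm
    · tauto
    · tauto
  loopless := ⟨fun u h => h.1 rfl⟩

lemma addG_nbr_t {G : SimpleGraph V} {t s : V} (hts : t ≠ s) :
    (addG G t s).neighborSet t = insert s (G.neighborSet t) := by
  ext v
  simp only [SimpleGraph.mem_neighborSet, Set.mem_insert_iff]
  constructor
  · rintro ⟨h, h2 | h2 | h2⟩
    · exact Or.inr h2
    · exact Or.inl h2.2
    · exact absurd h2.1 hts
  · rintro (rfl | h)
    · exact ⟨hts, Or.inr (Or.inl ⟨rfl, rfl⟩)⟩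
    · exact ⟨h.ne, Or.inl h⟩

lemma addG_comm (G : SimpleGraph V) (t s : V) : addG G t s = addG G s t := by
  ext u v; simp only [addG]; constructor <;> rintro ⟨h, h2⟩ <;> exact ⟨h, by tauto⟩

lemma addG_nbr_other {G : SimpleGraph V} {t s v : V} (hv : v ≠ t) (hv' : v ≠ s) :
    (addG G t s).neighborSet v = G.neighborSet v := by
  ext u
  simp only [SimpleGraph.mem_neighborSet]
  constructor
  · rintro ⟨h, h2 | h2 | h2⟩
    · exact h2
    · exact absurd h2.1 hv
    · exact absurd h2.1 hv'
  · intro h; exact ⟨h.ne, Or.inl h⟩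

lemma addG_realizes {G : SimpleGraph V} {t s : V} (hts : t ≠ s) (hna : ¬ G.Adj t s) :
    ∀ v, ((addG G t s).neighborSet v).ncard
      = (G.neighborSet v).ncard + (if v = t ∨ v = s then 1 else 0) := by
  intro v
  by_cases hvt : v = t
  · subst hvt
    have h1 : s ∉ G.neighborSet v := hna
    rw [addG_nbr_t hts, Set.ncard_insert_of_notMem h1 (Set.toFinite _), if_pos (Or.inl rfl)]
  by_cases hvs : v = s
  · subst hvs
    have h1 : t ∉ G.neighborSet v := fun h => hna (G.adj_symm h)
    rw [addG_comm, addG_nbr_t hts.symm, Set.ncard_insert_of_notMem h1 (Set.toFinite _),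
      if_pos (Or.inr rfl)]
  · rw [addG_nbr_other hvt hvs, if_neg (by tauto)]
    simp

section Swap
variable (G : SimpleGraph V) (t w s x : V)

/-- Graph with edge `w-x` replaced by `t-w` and `s-x`. -/
def swapG : SimpleGraph V where
  Adj u v := u ≠ v ∧ ((G.Adj u v ∧ ¬(u = w ∧ v = x) ∧ ¬(u = x ∧ v = w)) ∨
    (u = t ∧ v = w) ∨ (u = w ∧ v = t) ∨ (u = s ∧ v = x) ∨ (u = x ∧ v = s))
  symm := by
    constructor
    rintro u v ⟨h, h2⟩
    refine ⟨h.symm, ?_⟩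
    rcases h2 with ⟨ha, hb, hc⟩ | h2 | h2 | h2 | h2
    · exact Or.inl ⟨ha.symm, fun hh => hc ⟨hh.2, hh.1⟩, fun hh => hb ⟨hh.2, hh.1⟩⟩
    all_goals tauto
  loopless := ⟨fun u h => h.1 rfl⟩

variable {G t w s x}
variable (htw : ¬ G.Adj t w) (hwx : G.Adj w x) (hsx : ¬ G.Adj s x)
variable (hts : t ≠ s) (htw' : t ≠ w) (htx : t ≠ x) (hsw : s ≠ w) (hsx' : s ≠ x) (hwx' : w ≠ x)

include htw hwx hsx hts htw' htx hsw hsx' hwx'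

lemma swapG_nbr_t : (swapG G t w s x).neighborSet t = insert w (G.neighborSet t) := by
  ext v
  simp only [SimpleGraph.mem_neighborSet, Set.mem_insert_iff]
  constructor
  · rintro ⟨h, ⟨ha, _, _⟩ | ⟨_, rfl⟩ | h2 | h2 | h2⟩
    · exact Or.inr ha
    · exact Or.inl rfl
    · exact absurd h2.1 htw'
    · exact absurd h2.1 hts
    · exact absurd h2.1 htx
  · rintro (rfl | h)
    · exact ⟨htw', Or.inr (Or.inl ⟨rfl, rfl⟩)⟩
    · exact ⟨h.ne, Or.inl ⟨h, fun hh => htw' hh.1, fun hh => htx hh.1⟩⟩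

lemma swapG_nbr_s : (swapG G t w s x).neighborSet s = insert x (G.neighborSet s) := by
  ext v
  simp only [SimpleGraph.mem_neighborSet, Set.mem_insert_iff]
  constructor
  · rintro ⟨h, ⟨ha, _, _⟩ | h2 | h2 | ⟨_, rfl⟩ | h2⟩
    · exact Or.inr ha
    · exact absurd h2.1.symm hts
    · exact absurd h2.1 hsw
    · exact Or.inl rfl
    · exact absurd h2.1 hsx'
  · rintro (rfl | h)
    · exact ⟨hsx', Or.inr (Or.inr (Or.inr (Or.inl ⟨rfl, rfl⟩)))⟩
    · exact ⟨h.ne, Or.inl ⟨h, fun hh => hsw hh.1, fun hh => hsx' hh.1⟩⟩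

lemma swapG_nbr_w :
    (swapG G t w s x).neighborSet w = insert t (G.neighborSet w \ {x}) := by
  ext v
  simp only [SimpleGraph.mem_neighborSet, Set.mem_insert_iff, Set.mem_diff,
    Set.mem_singleton_iff]
  constructor
  · rintro ⟨h, ⟨ha, hb, _⟩ | h2 | ⟨_, rfl⟩ | h2 | h2⟩
    · exact Or.inr ⟨ha, fun hvx => hb ⟨rfl, hvx⟩⟩
    · exact absurd h2.1 (Ne.symm htw')
    · exact Or.inl rfl
    · exact absurd h2.1 (Ne.symm hsw)
    · exact absurd h2.1 hwx'
  · rintro (rfl | ⟨h, hne⟩)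
    · exact ⟨Ne.symm htw', Or.inr (Or.inr (Or.inl ⟨rfl, rfl⟩))⟩
    · exact ⟨h.ne, Or.inl ⟨h, fun hh => hne hh.2, fun hh => hwx' hh.1⟩⟩

lemma swapG_nbr_x :
    (swapG G t w s x).neighborSet x = insert s (G.neighborSet x \ {w}) := by
  ext v
  simp only [SimpleGraph.mem_neighborSet, Set.mem_insert_iff, Set.mem_diff,
    Set.mem_singleton_iff]
  constructor
  · rintro ⟨h, ⟨ha, _, hc⟩ | h2 | h2 | h2 | ⟨_, rfl⟩⟩
    · exact Or.inr ⟨ha, fun hvw => hc ⟨rfl, hvw⟩⟩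
    · exact absurd h2.1 (Ne.symm htx)
    · exact absurd h2.1 (Ne.symm hwx')
    · exact absurd h2.1 (Ne.symm hsx')
    · exact Or.inl rfl
  · rintro (rfl | ⟨h, hne⟩)
    · exact ⟨Ne.symm hsx', Or.inr (Or.inr (Or.inr (Or.inr ⟨rfl, rfl⟩)))⟩
    · exact ⟨h.ne, Or.inl ⟨h, fun hh => hwx' hh.1.symm, fun hh => hne hh.2⟩⟩

omit htw hwx hsx hts htw' htx hsw hsx' hwx' in
lemma swapG_nbr_other {v : V} (h1 : v ≠ t) (h2 : v ≠ w) (h3 : v ≠ s) (h4 : v ≠ x) :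
    (swapG G t w s x).neighborSet v = G.neighborSet v := by
  ext u
  simp only [SimpleGraph.mem_neighborSet]
  constructor
  · rintro ⟨h, ⟨ha, _, _⟩ | hh | hh | hh | hh⟩
    · exact ha
    · exact absurd hh.1 h1
    · exact absurd hh.1 h2
    · exact absurd hh.1 h3
    · exact absurd hh.1 h4
  · intro h
    exact ⟨h.ne, Or.inl ⟨h, fun hh => h2 hh.1, fun hh => h4 hh.1⟩⟩

lemma swapG_realizes :
    ∀ v, ((swapG G t w s x).neighborSet v).ncard
      = (G.neighborSet v).ncard + (if v = t ∨ v = s then 1 else 0) := by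
  intro v
  by_cases h1 : v = t
  · subst h1
    have hh : w ∉ G.neighborSet v := htw
    rw [swapG_nbr_t htw hwx hsx hts htw' htx hsw hsx' hwx',
      Set.ncard_insert_of_notMem hh (Set.toFinite _), if_pos (Or.inl rfl)]
  by_cases h3 : v = s
  · subst h3
    have hh : x ∉ G.neighborSet v := hsx
    rw [swapG_nbr_s htw hwx hsx hts htw' htx hsw hsx' hwx',
      Set.ncard_insert_of_notMem hh (Set.toFinite _), if_pos (Or.inr rfl)]
  by_cases h2 : v = w
  · subst h2
    have hh : t ∉ G.neighborSet v := fun h => htw (G.adj_symm h)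
    have hh2 : x ∈ G.neighborSet v := hwx
    rw [swapG_nbr_w htw hwx hsx hts htw' htx hsw hsx' hwx',
      Set.ncard_exchange hh hh2, if_neg (by tauto)]
    simp
  by_cases h4 : v = x
  · subst h4
    have hh : s ∉ G.neighborSet v := fun h => hsx (G.adj_symm h)
    have hh2 : w ∈ G.neighborSet v := G.adj_symm hwx
    rw [swapG_nbr_x htw hwx hsx hts htw' htx hsw hsx' hwx',
      Set.ncard_exchange hh hh2, if_neg (by tauto)]
    simp
  · rw [swapG_nbr_other h1 h2 h3 h4, if_neg (by tauto)]
    simp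

end Swap


/-- Sum of a block of equal values. -/
lemma sum_block {D : ℕ → ℕ} {a u v : ℕ} (h : ∀ i, u ≤ i → i < v → D i = a) :
    ∑ i ∈ Ico u v, D i = (v - u) * a := by
  calc ∑ i ∈ Ico u v, D i = ∑ _i ∈ Ico u v, a :=
        Finset.sum_congr rfl fun i hi => by
          rw [Finset.mem_Ico] at hi; exact h i hi.1 hi.2
  _ = (v - u) * a := by rw [Finset.sum_const, Nat.card_Ico, smul_eq_mul]

lemma sum_range_block {D : ℕ → ℕ} {a v : ℕ} (h : ∀ i, i < v → D i = a) :
    ∑ i ∈ range v, D i = v * a := by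
  rw [range_eq_Ico, sum_block (fun i _ hi => h i hi), Nat.sub_zero]

/-- The hard strictness lemma: strict Erdős–Gallai inequality at `k` when the first
`t1` entries all equal `a > k` and the last positive entry is `≤ k`. -/
lemma strictEG {D : ℕ → ℕ} {n k s t1 a : ℕ}
    (hmono : ∀ i j, i ≤ j → D j ≤ D i)
    (hblock : ∀ i, i < t1 → D i = a)
    (ht1s : t1 < s) (hsn : s ≤ n)
    (hpos : ∀ i, i < s → 1 ≤ D i)
    (hβ : D (s - 1) ≤ k)
    (hk1 : 1 ≤ k) (hkt : k < t1) (hka : k < a)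
    (hEG1 : ∑ i ∈ range t1, D i ≤ t1 * (t1 - 1) + ∑ i ∈ Ico t1 n, min (D i) t1) :
    (∑ i ∈ range k, D i) + 1 ≤ k * (k - 1) + ∑ i ∈ Ico k n, min (D i) k := by
  have hex : ∃ q, D q ≤ k := ⟨s - 1, hβ⟩
  set q := Nat.find hex with hqdef
  have hqspec : D q ≤ k := Nat.find_spec hex
  have hqmin : ∀ i, i < q → k + 1 ≤ D i := fun i hi => by
    have := Nat.find_min hex hi; omega
  have hqs : q ≤ s - 1 := Nat.find_min' hex hβ
  clear_value q
  have hs1 : 2 ≤ s := by omega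
  have hqn : q < n := by omega
  have hkq : k < q := by
    by_contra h
    have := hmono q k (by omega)
    have := hblock k hkt
    omega
  have ht1q : t1 ≤ q := by
    by_contra h
    have := hblock q (by omega)
    omega
  have hDq1 : 1 ≤ D q := hpos q (by omega)
  have hL : ∑ i ∈ range k, D i = k * a := sum_range_block fun i hi => hblock i (by omega)
  -- split R at q
  have hsplit : ∑ i ∈ Ico k n, min (D i) k
      = (q - k) * k + ∑ i ∈ Ico q n, min (D i) k := by
    rw [← Finset.sum_Ico_consecutive _ (by omega : k ≤ q) (by omega : q ≤ n)]
    congr 1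
    calc ∑ i ∈ Ico k q, min (D i) k = ∑ _i ∈ Ico k q, k :=
          Finset.sum_congr rfl fun i hi => by
            rw [Finset.mem_Ico] at hi
            have := hqmin i hi.2; omega
    _ = (q - k) * k := by rw [Finset.sum_const, Nat.card_Ico, smul_eq_mul]
  have hT : ∑ i ∈ Ico q n, min (D i) k = ∑ i ∈ Ico q n, D i := by
    refine Finset.sum_congr rfl fun i hi => ?_
    rw [Finset.mem_Ico] at hi
    have := hmono q i hi.1; omega
  set T := ∑ i ∈ Ico q n, D i with hTdef
  have hT1 : 1 ≤ T := by
    calc 1 ≤ D q := hDq1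
    _ ≤ T := Finset.single_le_sum (f := D) (fun i _ => Nat.zero_le _)
        (Finset.mem_Ico.mpr ⟨le_refl _, hqn⟩)
  rw [hL, hsplit, hT]
  have hkk : k * (k - 1) + (q - k) * k = k * (q - 1) := by
    rw [Nat.mul_comm (q - k) k, ← Nat.mul_add]
    congr 1; omega
  rw [← Nat.add_assoc, hkk]
  by_cases hcase : a < q
  · have : k * a ≤ k * (q - 1) := Nat.mul_le_mul_left k (by omega)
    omega
  · push_neg at hcase  -- q ≤ a
    have hLt1 : ∑ i ∈ range t1, D i = t1 * a := sum_range_block fun i hi => hblock i hi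
    have hsplit2 : ∑ i ∈ Ico t1 n, min (D i) t1
        = ∑ i ∈ Ico t1 q, min (D i) t1 + ∑ i ∈ Ico q n, min (D i) t1 := by
      rw [Finset.sum_Ico_consecutive _ (by omega : t1 ≤ q) (by omega : q ≤ n)]
    have hb1 : ∑ i ∈ Ico t1 q, min (D i) t1 ≤ (q - t1) * t1 := by
      calc ∑ i ∈ Ico t1 q, min (D i) t1 ≤ ∑ _i ∈ Ico t1 q, t1 :=
        Finset.sum_le_sum fun i _ => Nat.min_le_right _ _
      _ = (q - t1) * t1 := by rw [Finset.sum_const, Nat.card_Ico, smul_eq_mul]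
    have hb2 : ∑ i ∈ Ico q n, min (D i) t1 = T := by
      refine Finset.sum_congr rfl fun i hi => ?_
      rw [Finset.mem_Ico] at hi
      have := hmono q i hi.1; omega
    have hkey : t1 * a ≤ t1 * (q - 1) + T := by
      have h1 : t1 * (t1 - 1) + (q - t1) * t1 = t1 * (q - 1) := by
        rw [Nat.mul_comm (q - t1) t1, ← Nat.mul_add]
        congr 1; omega
      rw [hLt1, hsplit2, hb2] at hEG1
      omega
    obtain ⟨Q, rfl⟩ : ∃ Q, q = Q + 1 := ⟨q - 1, by omega⟩
    simp only [Nat.add_sub_cancel] at hkey ⊢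
    obtain ⟨u, rfl⟩ : ∃ u, t1 = k + 1 + u := ⟨t1 - (k + 1), by omega⟩
    obtain ⟨v, rfl⟩ : ∃ v, a = Q + 1 + v := ⟨a - (Q + 1), by omega⟩
    have h5 : (k + 1 + u) * (Q + 1 + v) = (k + 1 + u) * Q + (k + 1 + u) * (1 + v) := by ring
    have hT2 : (k + 1 + u) * (1 + v) ≤ T := by linarith
    have hA : (k + 1) * (1 + v) ≤ (k + 1 + u) * (1 + v) := Nat.mul_le_mul_right _ (by omega)
    have hB : (k + 1) * (1 + v) = k * (1 + v) + (1 + v) := by ring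
    have h6 : k * (Q + 1 + v) = k * Q + k * (1 + v) := by ring
    linarith

/-- The case `a ≤ k`: two units of slack in the Erdős–Gallai inequality at `k`,
using parity of the total sum. -/
lemma case3aEG {D : ℕ → ℕ} {n k s t1 a : ℕ}
    (hmono : ∀ i j, i ≤ j → D j ≤ D i)
    (hblock : ∀ i, i < t1 → D i = a)
    (ht1s : t1 < s) (hsn : s ≤ n)
    (hpos : ∀ i, i < s → 1 ≤ D i)
    (hzero : ∀ i, s ≤ i → D i = 0)
    (hk1 : 1 ≤ k) (hkt : k < t1) (hak : a ≤ k)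
    (heven : Even (∑ i ∈ range n, D i)) :
    (∑ i ∈ range k, D i) + 2 ≤ k * (k - 1) + ∑ i ∈ Ico k n, min (D i) k := by
  have ha1 : 1 ≤ a := by have := hblock 0 (by omega); have := hpos 0 (by omega); omega
  have hDle : ∀ i, D i ≤ a := fun i => by
    have := hmono 0 i (Nat.zero_le _); have := hblock 0 (by omega); omega
  have hL : ∑ i ∈ range k, D i = k * a := sum_range_block fun i hi => hblock i (by omega)
  have hmin : ∑ i ∈ Ico k n, min (D i) k = ∑ i ∈ Ico k n, D i := by
    refine Finset.sum_congr rfl fun i _ => by have := hDle i; omega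
  have hsplitk : ∑ i ∈ Ico k n, D i = (t1 - k) * a + ∑ i ∈ Ico t1 n, D i := by
    rw [← Finset.sum_Ico_consecutive _ (by omega : k ≤ t1) (by omega : t1 ≤ n),
      sum_block (fun i _ hi => hblock i hi)]
  set S2 := ∑ i ∈ Ico t1 n, D i with hS2def
  have hS2r : s - t1 ≤ S2 := by
    calc s - t1 = ∑ _i ∈ Ico t1 s, 1 := by
          rw [Finset.sum_const, Nat.card_Ico, smul_eq_mul, Nat.mul_one]
    _ ≤ ∑ i ∈ Ico t1 s, D i := Finset.sum_le_sum fun i hi => by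
        rw [Finset.mem_Ico] at hi; exact hpos i hi.2
    _ ≤ S2 := Finset.sum_le_sum_of_subset (Finset.Ico_subset_Ico (le_refl _) hsn)
  have hS21 : 1 ≤ S2 := by omega
  rw [hL, hmin, hsplitk]
  obtain ⟨K', rfl⟩ : ∃ K', k = K' + 1 := ⟨k - 1, by omega⟩
  simp only [Nat.add_sub_cancel]
  obtain ⟨e, he⟩ : ∃ e, t1 = K' + 1 + e := ⟨t1 - (K' + 1), by omega⟩
  have he1 : 1 ≤ e := by omega
  have hesub : t1 - (K' + 1) = e := by omega
  rw [hesub]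
  by_cases hiv : e = 1 ∧ s = t1 + 1 ∧ a = K' + 1
  · -- tight case: use parity
    obtain ⟨hee, hse, hae⟩ := hiv
    have hS2e : S2 = D (s - 1) := by
      rw [hS2def, ← Finset.sum_Ico_consecutive _ (by omega : t1 ≤ s) (by omega : s ≤ n)]
      have h2 : ∑ i ∈ Ico s n, D i = 0 :=
        Finset.sum_eq_zero fun i hi => hzero i (Finset.mem_Ico.mp hi).1
      have h1 : Ico t1 s = {s - 1} := by
        have : t1 = s - 1 := by omega
        subst this
        have h3 : s = (s - 1) + 1 := by omega
        rw [h3]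
        simp [Nat.Ico_succ_singleton]
      rw [h1, h2, Finset.sum_singleton, Nat.add_zero]
    have hM : ∑ i ∈ range n, D i = t1 * a + S2 := by
      rw [range_eq_Ico, ← Finset.sum_Ico_consecutive _ (Nat.zero_le t1) (by omega : t1 ≤ n),
        sum_block (fun i _ hi => hblock i hi), Nat.sub_zero]
    have hpar : D (s - 1) % 2 = 0 := by
      rw [hM, hS2e] at heven
      have hev2 : Even (t1 * a) := by
        rw [hae, he, hee, show K' + 1 + 1 = K' + 2 by rfl, Nat.mul_comm]
        exact Nat.even_mul_succ_self (K' + 1)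
      rcases heven with ⟨c, hc⟩
      rcases hev2 with ⟨d, hd⟩
      omega
    have hβpos : 1 ≤ D (s - 1) := hpos (s - 1) (by omega)
    have hβ2 : 2 ≤ D (s - 1) := by omega
    rw [hS2e, hae, hee]
    have hz : (K' + 1) * (K' + 1) = (K' + 1) * K' + (K' + 1) := by ring
    have hone : 1 * (K' + 1) = K' + 1 := by ring
    linarith [hβ2]
  · have h3 : 2 ≤ e ∨ t1 + 2 ≤ s ∨ a ≤ K' := by omega
    have hea : a ≤ e * a := Nat.le_mul_of_pos_left a (by omega)
    rcases h3 with h3 | h3 | h3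
    all_goals
      have hx : (K' + 1) * a = K' * a + a := by ring
      have hy : K' * (K' + 1) = (K' + 1) * K' := by ring
    · have h2a : 2 * a ≤ e * a := Nat.mul_le_mul_right a h3
      have h2a' : 2 * a = a + a := by ring
      have h1 : K' * a ≤ K' * (K' + 1) := Nat.mul_le_mul_left K' hak
      linarith
    · have hS22 : 2 ≤ S2 := by omega
      have h1 : K' * a ≤ K' * (K' + 1) := Nat.mul_le_mul_left K' hak
      linarith
    · have h1 : (K' + 1) * a ≤ (K' + 1) * K' := Nat.mul_le_mul_left _ h3
      linarith


set_option maxHeartbeats 2000000 in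
theorem eg_graphic : ∀ (M n : ℕ) (D : ℕ → ℕ),
    (∀ i j, i ≤ j → D j ≤ D i) →
    (∀ i, n ≤ i → D i = 0) →
    (∑ i ∈ range n, D i) = M →
    Even M →
    (∀ k, 1 ≤ k → k ≤ n → ∑ i ∈ range k, D i ≤ k * (k - 1) + ∑ i ∈ Ico k n, min (D i) k) →
    ∃ G : SimpleGraph (Fin n), ∀ v : Fin n, (G.neighborSet v).ncard = D v.val := by
  intro M
  induction M using Nat.strong_induction_on with
  | _ M IH =>
  intro n D hmono hsupp hsum heven hEG
  classical
  by_cases hM0 : M = 0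
  · -- zero case: empty graph
    subst hM0
    refine ⟨⊥, fun v => ?_⟩
    have hz : D v.val = 0 := by
      have := Finset.sum_eq_zero_iff.mp hsum v.val (Finset.mem_range.mpr v.2)
      exact this
    have : (⊥ : SimpleGraph (Fin n)).neighborSet v = ∅ := by ext u; simp
    rw [this, hz, Set.ncard_empty]
  -- positive case
  have hM2 : 2 ≤ M := by
    rcases heven with ⟨c, hc⟩; omega
  have hn1 : 1 ≤ n := by
    by_contra h
    have : n = 0 := by omega
    subst this
    simp at hsum; omega
  have hD0 : 1 ≤ D 0 := by
    by_contra h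
    have h0 : D 0 = 0 := by omega
    have : ∑ i ∈ range n, D i = 0 := Finset.sum_eq_zero fun i _ => by
      have := hmono 0 i (Nat.zero_le _); omega
    omega
  set a := D 0 with hadef
  -- s := least zero index
  have hexs : ∃ i, D i = 0 := ⟨n, hsupp n le_rfl⟩
  set s := Nat.find hexs with hsdef
  have hszero : D s = 0 := Nat.find_spec hexs
  have hspos : ∀ i, i < s → 1 ≤ D i := fun i hi => by
    have := Nat.find_min hexs hi; omega
  have hsn : s ≤ n := Nat.find_min' hexs (hsupp n le_rfl)
  have hzero : ∀ i, s ≤ i → D i = 0 := fun i hi => by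
    have := hmono s i hi; omega
  clear_value s
  have hs1 : 1 ≤ s := by
    by_contra h
    have : s = 0 := by omega
    subst this; omega
  -- EG at 1 gives a ≤ s - 1
  have hone : ∑ i ∈ Ico 1 n, min (D i) 1 = s - 1 := by
    rw [← Finset.sum_Ico_consecutive _ (hs1) (hsn)]
    have h1 : ∑ i ∈ Ico 1 s, min (D i) 1 = ∑ _i ∈ Ico 1 s, 1 :=
      Finset.sum_congr rfl fun i hi => by
        rw [Finset.mem_Ico] at hi
        have := hspos i hi.2; omega
    have h2 : ∑ i ∈ Ico s n, min (D i) 1 = 0 :=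
      Finset.sum_eq_zero fun i hi => by
        rw [Finset.mem_Ico] at hi
        have := hzero i hi.1; omega
    rw [h1, h2, Finset.sum_const, Nat.card_Ico, smul_eq_mul, Nat.mul_one, Nat.add_zero]
  have has : a ≤ s - 1 := by
    have := hEG 1 le_rfl hn1
    rw [hone] at this
    simpa using this
  have hs2 : 2 ≤ s := by omega
  -- K := first non-max index
  have hexK : ∃ i, D i < a := ⟨n, by have := hsupp n le_rfl; omega⟩
  set K := Nat.find hexK with hKdef
  have hKspec : D K < a := Nat.find_spec hexK
  have hKblock : ∀ i, i < K → D i = a := fun i hi => by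
    have h1 := Nat.find_min hexK hi
    have h2 := hmono 0 i (Nat.zero_le _)
    omega
  have hK1 : 1 ≤ K := by
    by_contra h
    have : K = 0 := by omega
    rw [this] at hKspec; omega
  clear_value K
  -- t1 and t0
  set t1 := min K (s - 1) with ht1def
  have ht11 : 1 ≤ t1 := by omega
  have ht1s : t1 < s := by omega
  have hblockt1 : ∀ i, i < t1 → D i = a := fun i hi => hKblock i (by omega)
  set t0 := t1 - 1 with ht0def
  have ht0t1 : t0 + 1 = t1 := by omega
  have ht0s : t0 < s - 1 := by omega
  have hDt0 : D t0 = a := hblockt1 t0 (by omega)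
  set β := D (s - 1) with hβdef
  have hβ1 : 1 ≤ β := hspos (s - 1) (by omega)
  have hβa : β ≤ a := by have := hmono 0 (s - 1) (Nat.zero_le _); omega
  -- key property: entries after t0 other than s-1 are < a
  have hafter : ∀ j, t0 < j → j ≠ s - 1 → D j ≤ a - 1 := by
    intro j hj hjs
    rcases Nat.le_total K (s - 1) with hc | hc
    · -- t1 = K
      have ht1K : t1 = K := by omega
      have : K ≤ j := by omega
      have := hmono K j this
      omega
    · -- t1 = s - 1
      have ht1e : t1 = s - 1 := by omega
      have : s ≤ j := by omega
      have := hzero j this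
      omega
  -- the reduced sequence
  set d' : ℕ → ℕ := fun i => if i = t0 ∨ i = s - 1 then D i - 1 else D i with hd'def
  have hd't0 : d' t0 = a - 1 := by simp [hd'def, hDt0]
  have hd's : d' (s - 1) = β - 1 := by
    simp [hd'def]
    rfl
  have hd'other : ∀ i, i ≠ t0 → i ≠ s - 1 → d' i = D i := fun i h1 h2 => by
    simp only [hd'def]
    rw [if_neg (by tauto)]
  have hd'le : ∀ i, d' i ≤ D i := fun i => by
    simp only [hd'def]; split <;> omega
  -- pointwise identities
  have hpt : ∀ i, D i = d' i + (if i = t0 then 1 else 0) + (if i = s - 1 then 1 else 0) := by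
    intro i
    by_cases h1 : i = t0
    · subst h1
      have e1 : (if t0 = t0 then (1:ℕ) else 0) = 1 := if_pos rfl
      have e2 : (if t0 = s - 1 then (1:ℕ) else 0) = 0 := if_neg (by omega)
      rw [e1, e2, hd't0, hDt0]; omega
    by_cases h2 : i = s - 1
    · subst h2
      have e1 : (if s - 1 = t0 then (1:ℕ) else 0) = 0 := if_neg (by omega)
      have e2 : (if s - 1 = s - 1 then (1:ℕ) else 0) = 1 := if_pos rfl
      rw [e1, e2, hd's]
      omega
    · rw [hd'other i h1 h2, if_neg h1, if_neg h2]
      omega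
  have hsumF : ∀ F : Finset ℕ, ∑ i ∈ F, D i
      = ∑ i ∈ F, d' i + (if t0 ∈ F then 1 else 0) + (if s - 1 ∈ F then 1 else 0) := by
    intro F
    calc ∑ i ∈ F, D i
        = ∑ i ∈ F, (d' i + (if i = t0 then 1 else 0) + (if i = s - 1 then 1 else 0)) :=
          Finset.sum_congr rfl fun i _ => hpt i
    _ = ∑ i ∈ F, d' i + ∑ i ∈ F, (if i = t0 then 1 else 0)
          + ∑ i ∈ F, (if i = s - 1 then 1 else 0) := by
          rw [Finset.sum_add_distrib, Finset.sum_add_distrib]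
    _ = _ := by rw [Finset.sum_ite_eq' F t0 (fun _ => 1), Finset.sum_ite_eq' F (s-1) (fun _ => 1)]
  have hminpt : ∀ k i, min (D i) k
      = min (d' i) k + (if i = t0 then (if a ≤ k then 1 else 0) else 0)
        + (if i = s - 1 then (if β ≤ k then 1 else 0) else 0) := by
    intro k i
    by_cases h1 : i = t0
    · subst h1
      have e1 : (if t0 = t0 then (if a ≤ k then (1:ℕ) else 0) else 0)
          = (if a ≤ k then (1:ℕ) else 0) := if_pos rfl
      have e2 : (if t0 = s - 1 then (if β ≤ k then (1:ℕ) else 0) else 0) = 0 :=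
        if_neg (by omega)
      rw [e1, e2, hd't0, hDt0]
      by_cases hak : a ≤ k
      · rw [if_pos hak]; omega
      · rw [if_neg hak]; omega
    by_cases h2 : i = s - 1
    · subst h2
      have e1 : (if s - 1 = t0 then (if a ≤ k then (1:ℕ) else 0) else 0) = 0 :=
        if_neg (by omega)
      have e2 : (if s - 1 = s - 1 then (if β ≤ k then (1:ℕ) else 0) else 0)
          = (if β ≤ k then (1:ℕ) else 0) := if_pos rfl
      rw [e1, e2, hd's]
      by_cases hbk : β ≤ k
      · rw [if_pos hbk]; omega
      · rw [if_neg hbk]; omega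
    · rw [hd'other i h1 h2, if_neg h1, if_neg h2]
      omega
  have hminF : ∀ k (F : Finset ℕ), ∑ i ∈ F, min (D i) k
      = ∑ i ∈ F, min (d' i) k + (if t0 ∈ F then (if a ≤ k then 1 else 0) else 0)
        + (if s - 1 ∈ F then (if β ≤ k then 1 else 0) else 0) := by
    intro k F
    calc ∑ i ∈ F, min (D i) k
        = ∑ i ∈ F, (min (d' i) k + (if i = t0 then (if a ≤ k then 1 else 0) else 0)
            + (if i = s - 1 then (if β ≤ k then 1 else 0) else 0)) :=
          Finset.sum_congr rfl fun i _ => hminpt k i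
    _ = ∑ i ∈ F, min (d' i) k + ∑ i ∈ F, (if i = t0 then (if a ≤ k then 1 else 0) else 0)
          + ∑ i ∈ F, (if i = s - 1 then (if β ≤ k then 1 else 0) else 0) := by
          rw [Finset.sum_add_distrib, Finset.sum_add_distrib]
    _ = _ := by rw [Finset.sum_ite_eq' F t0 (fun _ => (if a ≤ k then 1 else 0)),
          Finset.sum_ite_eq' F (s-1) (fun _ => (if β ≤ k then 1 else 0))]
  -- hypotheses for the IH
  have hmono' : ∀ i j, i ≤ j → d' j ≤ d' i := by
    intro i j hij
    by_cases hit : i = t0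
    · subst hit
      rw [hd't0]
      by_cases hjt : j = t0
      · subst hjt; rw [hd't0]
      by_cases hjs : j = s - 1
      · subst hjs; rw [hd's]; omega
      · rw [hd'other j hjt hjs]
        exact le_trans (hafter j (by omega) hjs) (by omega)
    by_cases his : i = s - 1
    · subst his
      rw [hd's]
      by_cases hjs : j = s - 1
      · subst hjs; rw [hd's]
      · have hjt : j ≠ t0 := by omega
        rw [hd'other j hjt hjs]
        have : s ≤ j := by omega
        rw [hzero j this]; omega
    · rw [hd'other i hit his]
      by_cases hjt : j = t0
      · subst hjt
        rw [hd't0]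
        have : i < t0 := by omega
        rw [hblockt1 i (by omega)]; omega
      by_cases hjs : j = s - 1
      · subst hjs
        rw [hd's]
        have := hmono i (s - 1) hij
        omega
      · rw [hd'other j hjt hjs]
        exact hmono i j hij
  have hsupp' : ∀ i, n ≤ i → d' i = 0 := by
    intro i hi
    rw [hd'other i (by omega) (by omega)]
    exact hsupp i hi
  have hsum' : ∑ i ∈ range n, d' i = M - 2 := by
    have := hsumF (range n)
    rw [if_pos (Finset.mem_range.mpr (by omega)), if_pos (Finset.mem_range.mpr (by omega))]
      at this
    omega
  have heven' : Even (M - 2) := by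
    rcases heven with ⟨c, hc⟩
    exact ⟨c - 1, by omega⟩
  have hspos' : ∀ i, i < s → 1 ≤ D i := hspos
  clear_value a t1 t0 β d'
  -- EG for d'
  have hEG' : ∀ k, 1 ≤ k → k ≤ n →
      ∑ i ∈ range k, d' i ≤ k * (k - 1) + ∑ i ∈ Ico k n, min (d' i) k := by
    intro k hk1 hkn
    have hA := hsumF (range k)
    have hB := hminF k (Ico k n)
    have hEGk := hEG k hk1 hkn
    simp only [Finset.mem_range, Finset.mem_Ico] at hA hB
    have ht0n : t0 < n := by omega
    have hs1n : s - 1 < n := by omega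
    rcases Nat.lt_or_ge t0 k with hc1 | hc1
    · -- t0 < k : easy cases
      rw [if_pos hc1] at hA
      rw [if_neg (show ¬(k ≤ t0 ∧ t0 < n) by omega)] at hB
      rcases Nat.lt_or_ge (s - 1) k with hc2 | hc2
      · rw [if_pos hc2] at hA
        rw [if_neg (show ¬(k ≤ s - 1 ∧ s - 1 < n) by omega)] at hB
        omega
      · rw [if_neg (show ¬(s - 1 < k) by omega)] at hA
        rw [if_pos (show k ≤ s - 1 ∧ s - 1 < n by omega)] at hB
        have : (if β ≤ k then 1 else 0) ≤ 1 := by split <;> omega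
        omega
    · -- k ≤ t0
      rw [if_neg (show ¬(t0 < k) by omega), if_neg (show ¬(s - 1 < k) by omega)] at hA
      rw [if_pos (show k ≤ t0 ∧ t0 < n by omega),
        if_pos (show k ≤ s - 1 ∧ s - 1 < n by omega)] at hB
      rcases Nat.lt_or_ge k β with hc2 | hc2
      · -- no drops
        rw [if_neg (show ¬(a ≤ k) by omega), if_neg (show ¬(β ≤ k) by omega)] at hB
        omega
      · rcases Nat.lt_or_ge k a with hc3 | hc3
        · -- strict case
          rw [if_neg (show ¬(a ≤ k) by omega), if_pos hc2] at hB
          have hstrict := strictEG hmono hblockt1 ht1s hsn hspos (by omega : D (s-1) ≤ k)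
            hk1 (by omega : k < t1) hc3 (hEG t1 (by omega) (by omega))
          omega
        · -- a ≤ k : parity case
          rw [if_pos hc3, if_pos hc2] at hB
          have hcase3a := case3aEG hmono hblockt1 ht1s hsn hspos hzero hk1
            (by omega : k < t1) hc3 (by rw [hsum]; exact heven)
          omega
  -- apply IH
  obtain ⟨G', hG'⟩ := IH (M - 2) (by omega) n d' hmono' hsupp' hsum' heven' hEG'
  -- augment
  set tf : Fin n := ⟨t0, by omega⟩ with htfdef
  set sf : Fin n := ⟨s - 1, by omega⟩ with hsfdef
  have htfsf : tf ≠ sf := by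
    simp only [htfdef, hsfdef, Ne, Fin.mk.injEq]
    omega
  have hvadj : ∀ u v : Fin n, G'.Adj u v → 1 ≤ d' v.val := by
    intro u v h
    by_contra hcon
    have h0 : d' v.val = 0 := by omega
    have : (G'.neighborSet v).ncard = 0 := by rw [hG' v, h0]
    have hem : G'.neighborSet v = ∅ := by
      rwa [Set.ncard_eq_zero (Set.toFinite _)] at this
    have : u ∈ G'.neighborSet v := h.symm
    rw [hem] at this
    exact this
  have hvlt : ∀ v : Fin n, 1 ≤ d' v.val → v.val < s := by
    intro v hv
    by_contra hcon
    have := hzero v.val (by omega)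
    have := hd'le v.val
    omega
  have hfinal : ∀ (G : SimpleGraph (Fin n)),
      (∀ v, (G.neighborSet v).ncard = (G'.neighborSet v).ncard
        + (if v = tf ∨ v = sf then 1 else 0)) →
      ∀ v : Fin n, (G.neighborSet v).ncard = D v.val := by
    intro G hG v
    rw [hG v, hG' v]
    by_cases h1 : v = tf
    · subst h1
      rw [if_pos (Or.inl rfl)]
      simp only [htfdef]
      rw [hd't0, hDt0]; omega
    by_cases h2 : v = sf
    · subst h2
      rw [if_pos (Or.inr rfl)]
      simp only [hsfdef]
      rw [hd's, ← hβdef]; omega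
    · rw [if_neg (by tauto)]
      have hv1 : v.val ≠ t0 := fun h => h1 (Fin.ext h)
      have hv2 : v.val ≠ s - 1 := fun h => h2 (Fin.ext h)
      rw [hd'other v.val hv1 hv2, Nat.add_zero]
  by_cases hadj : G'.Adj tf sf
  · -- swap case
    have hdegt : (G'.neighborSet tf).ncard = a - 1 := by
      rw [hG' tf]; exact hd't0
    set F1 : Finset (Fin n) := Finset.univ.filter (fun v : Fin n => v.val < s) with hF1def
    have hF1card : F1.card = s := by
      have he : F1 = (range s).attachFin
          (fun m hm => lt_of_lt_of_le (Finset.mem_range.mp hm) hsn) := by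
        ext v
        simp [hF1def, Finset.mem_attachFin]
      rw [he, Finset.card_attachFin, Finset.card_range]
    have hdegt' : (G'.neighborFinset tf).card = a - 1 := by
      rw [← hdegt, SimpleGraph.neighborFinset, Set.ncard_eq_toFinset_card']
    have hF2sub : insert tf (G'.neighborFinset tf) ⊆ F1 := by
      intro u hu
      rw [Finset.mem_insert] at hu
      rw [hF1def, Finset.mem_filter]
      refine ⟨Finset.mem_univ _, ?_⟩
      rcases hu with rfl | hu
      · show tf.val < s
        simp only [htfdef]
        omega
      · have : G'.Adj tf u := (SimpleGraph.mem_neighborFinset _ _ _).mp hu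
        exact hvlt u (hvadj tf u this)
    have hcard2 : (insert tf (G'.neighborFinset tf)).card ≤ a :=
      le_trans (Finset.card_insert_le _ _) (by omega)
    have hex_w : ∃ w ∈ F1, w ∉ insert tf (G'.neighborFinset tf) := by
      by_contra hcon
      push_neg at hcon
      have hsub : F1 ⊆ insert tf (G'.neighborFinset tf) := hcon
      have := Finset.card_le_card hsub
      omega
    obtain ⟨w, hwF1, hwnot⟩ := hex_w
    rw [Finset.mem_insert] at hwnot
    push_neg at hwnot
    obtain ⟨hwtf, hwnbr⟩ := hwnot
    have hwlt : w.val < s := (Finset.mem_filter.mp hwF1).2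
    have htw : ¬ G'.Adj tf w := fun h => hwnbr ((SimpleGraph.mem_neighborFinset _ _ _).mpr h)
    have hwsf : w ≠ sf := fun h => htw (h ▸ hadj)
    have hwval : d' w.val = D w.val :=
      hd'other _ (fun h => hwtf (Fin.ext (h.trans (by simp [htfdef]))))
        (fun h => hwsf (Fin.ext (h.trans (by simp [hsfdef]))))
    have hcardw : β ≤ (G'.neighborSet w).ncard := by
      rw [hG' w, hwval]
      have := hmono w.val (s - 1) (by omega)
      omega
    have hcards : (G'.neighborSet sf).ncard = β - 1 := by
      rw [hG' sf]
      show d' sf.val = β - 1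
      simp only [hsfdef]
      exact hd's
    have hx : ∃ x, x ∈ G'.neighborSet w ∧ x ∉ G'.neighborSet sf ∧ x ≠ sf := by
      by_contra hcon
      push_neg at hcon
      have hsub : G'.neighborSet w ⊆ insert sf (G'.neighborSet sf) := by
        intro x hxw
        by_cases hx1 : x ∈ G'.neighborSet sf
        · exact Set.mem_insert_of_mem _ hx1
        · rw [hcon x hxw hx1]
          exact Set.mem_insert _ _
      have hle : (insert sf (G'.neighborSet sf)).ncard ≤ β := by
        have := Set.ncard_insert_le sf (G'.neighborSet sf)
        omega
      have heq : G'.neighborSet w = insert sf (G'.neighborSet sf) :=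
        Set.eq_of_subset_of_ncard_le hsub (by omega) (Set.toFinite _)
      have htf_in : tf ∈ insert sf (G'.neighborSet sf) :=
        Set.mem_insert_of_mem _ hadj.symm
      rw [← heq] at htf_in
      exact htw (SimpleGraph.Adj.symm htf_in)
    obtain ⟨x, hxw, hxs, hxsf⟩ := hx
    have hwx : G'.Adj w x := hxw
    have hsx : ¬ G'.Adj sf x := hxs
    have htx : tf ≠ x := by
      rintro rfl
      exact htw hxw.symm
    exact ⟨swapG G' tf w sf x, hfinal _ (swapG_realizes htw hwx hsx htfsf
      (Ne.symm hwtf) htx (Ne.symm hwsf) (Ne.symm hxsf) (G'.ne_of_adj hwx))⟩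
  · -- add-edge case
    exact ⟨addG G' tf sf, hfinal _ (addG_realizes htfsf hadj)⟩


/-- A sequence of length `n` is graphic if it is the degree sequence of some
finite simple graph on `n` vertices. -/
def IsGraphic {n : ℕ} (d : Fin n → ℕ) : Prop :=
  ∃ G : SimpleGraph (Fin n), ∀ i, (G.neighborSet i).ncard = d i

/-- Zverovich–Zverovich: a decreasing sequence of positive integers with even sum,
maximal element `a` and minimal element `b`, is graphic if `n·b ≥ (a+b+1)²/4`. -/
theorem zverovich_zverovich {n : ℕ} (hn : 0 < n) (d : Fin n → ℕ) (a b : ℕ)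
    (ha : a = d ⟨0, hn⟩) (hb : b = d ⟨n - 1, by omega⟩)
    (hdec : Antitone d) (hpos : ∀ i, 0 < d i) (heven : Even (∑ i, d i))
    (hineq : 4 * (n * b) ≥ (a + b + 1) ^ 2) :
    IsGraphic d := by
  classical
  set D : ℕ → ℕ := fun i => if h : i < n then d ⟨i, h⟩ else 0 with hDdef
  have hD : ∀ i (h : i < n), D i = d ⟨i, h⟩ := by
    intro i h
    simp only [hDdef]
    rw [dif_pos h]
  have hmono : ∀ i j, i ≤ j → D j ≤ D i := by
    intro i j hij
    by_cases hj : j < n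
    · rw [hD j hj, hD i (by omega)]
      exact hdec (show (⟨i, by omega⟩ : Fin n) ≤ ⟨j, hj⟩ from hij)
    · simp only [hDdef]
      rw [dif_neg hj]
      exact Nat.zero_le _
  have hsupp : ∀ i, n ≤ i → D i = 0 := by
    intro i hi
    simp only [hDdef]
    rw [dif_neg (by omega)]
  have hsum : ∑ i ∈ Finset.range n, D i = ∑ i, d i := by
    rw [← Fin.sum_univ_eq_sum_range]
    exact Finset.sum_congr rfl fun i _ => by rw [hD i.val i.2, Fin.eta]
  have hb1 : 1 ≤ b := by rw [hb]; exact hpos _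
  have hble : ∀ i, i < n → b ≤ D i := by
    intro i hi
    rw [hD i hi, hb]
    exact hdec (show (⟨i, hi⟩ : Fin n) ≤ ⟨n - 1, by omega⟩ from by
      show i ≤ n - 1
      omega)
  have hale : ∀ i, D i ≤ a := by
    intro i
    by_cases hi : i < n
    · rw [hD i hi, ha]
      exact hdec (show (⟨0, hn⟩ : Fin n) ≤ ⟨i, hi⟩ from Nat.zero_le _)
    · rw [hsupp i (by omega)]
      exact Nat.zero_le _
  have hiZ : ((a : ℤ) + b + 1) ^ 2 ≤ 4 * (n * b) := by exact_mod_cast hineq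
  have hna : a + 1 ≤ n := by
    have h1 : ((a : ℤ) + 1) * b ≤ (n : ℤ) * b := by
      nlinarith [sq_nonneg ((a : ℤ) + 1 - b)]
    have h2 : ((a : ℤ) + 1) ≤ n :=
      le_of_mul_le_mul_right h1 (by exact_mod_cast hb1)
    exact_mod_cast h2
  have hEG : ∀ k, 1 ≤ k → k ≤ n →
      ∑ i ∈ Finset.range k, D i ≤ k * (k - 1) + ∑ i ∈ Finset.Ico k n, min (D i) k := by
    intro k hk1 hkn
    have hL : ∑ i ∈ Finset.range k, D i ≤ k * a := by
      calc ∑ i ∈ Finset.range k, D i ≤ ∑ _i ∈ Finset.range k, a :=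
            Finset.sum_le_sum fun i _ => hale i
      _ = k * a := by rw [Finset.sum_const, Finset.card_range, smul_eq_mul]
    have hR : (n - k) * min b k ≤ ∑ i ∈ Finset.Ico k n, min (D i) k := by
      calc (n - k) * min b k = ∑ _i ∈ Finset.Ico k n, min b k := by
            rw [Finset.sum_const, Nat.card_Ico, smul_eq_mul]
      _ ≤ ∑ i ∈ Finset.Ico k n, min (D i) k :=
            Finset.sum_le_sum fun i hi => by
              have hi' := (Finset.mem_Ico.mp hi).2
              have := hble i hi'
              omega
    have hmain : k * a ≤ k * (k - 1) + (n - k) * min b k := by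
      rcases le_or_gt k b with hkb | hkb
      · rw [min_eq_right hkb]
        have he : k * (k - 1) + (n - k) * k = k * (n - 1) := by
          rw [Nat.mul_comm (n - k) k, ← Nat.mul_add]
          congr 1
          omega
        rw [he]
        exact Nat.mul_le_mul_left k (by omega)
      · rw [min_eq_left (by omega : b ≤ k)]
        zify [hk1, hkn]
        have hbk : (b : ℤ) < k := by exact_mod_cast hkb
        have hkn' : (k : ℤ) ≤ n := by exact_mod_cast hkn
        nlinarith [sq_nonneg ((a : ℤ) + b + 1 - 2 * k), hiZ]
    omega
  obtain ⟨G, hG⟩ := eg_graphic (∑ i, d i) n D hmono hsupp hsum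
    (by exact_mod_cast heven) hEG
  refine ⟨G, fun v => ?_⟩
  rw [hG v, hD v.val v.2, Fin.eta]
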